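/- Bregman quasi-triangle inequality: Let E be a finite-dimensional real inner product space, X ⊆ E, and let h satisfy the mirror hypotheses on X with Hessian bounds 0 < μ ≤ 𝓛, and set κ := 𝓛/μ (so κ ≥ 1). Then for all x, w, v ∈ X: D_h(x, v) ≤ 2κ·D_h(x, w) + 2κ·D_h(w, v), where D_h(a, b) := h(a) − h(b) − ⟨∇h(b), a − b⟩. -/

import Mathlib

open RealInnerProductSpace

/-- The mirror hypotheses for a kernel `h` with gradient `h'` and Hessian `h''`
on a set `X`: `h` is twice continuously differentiable on an open set containing `X`,
the image `h' '' X` is convex, and there is a continuously differentiable local inverse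
`gstar` of the mirror map `h'`, defined on an open set containing `h' '' X`, mapping the
convex hull of `h' '' X` into `X`. -/
structure MirrorHyp {E : Type*} [NormedAddCommGroup E] [InnerProductSpace ℝ E]
    [CompleteSpace E] (h : E → ℝ) (h' : E → E) (h'' : E → E →L[ℝ] E) (X : Set E) where
  U : Set E
  isOpen_U : IsOpen U
  subset_U : X ⊆ U
  grad : ∀ x ∈ U, HasGradientAt h (h' x) x
  hess : ∀ x ∈ U, HasFDerivAt h' (h'' x) x
  hess_cont : ContinuousOn h'' U
  img_convex : Convex ℝ (h' '' X)
  gstar : E → E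
  V : Set E
  isOpen_V : IsOpen V
  img_subset_V : h' '' X ⊆ V
  gstar_contDiff : ContDiffOn ℝ 1 gstar V
  gstar_rightInv : ∀ w ∈ V, h' (gstar w) = w
  gstar_leftInv : ∀ x ∈ X, gstar (h' x) = x
  gstar_maps : ∀ w ∈ convexHull ℝ (h' '' X), gstar w ∈ X

/-- The Bregman divergence `D_h(x, y) = h x - h y - ⟪∇h y, x - y⟫`. -/
noncomputable def bregman {E : Type*} [NormedAddCommGroup E] [InnerProductSpace ℝ E]
    (h : E → ℝ) (h' : E → E) (x y : E) : ℝ :=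
  h x - h y - ⟪h' y, x - y⟫

/-- Monotonicity from a nonnegative derivative on `[0,1]`. -/
private lemma monoAux {f f' : ℝ → ℝ}
    (hf : ∀ t ∈ Set.Icc (0:ℝ) 1, HasDerivAt f (f' t) t)
    (h0 : ∀ t ∈ Set.Icc (0:ℝ) 1, 0 ≤ f' t) :
    MonotoneOn f (Set.Icc 0 1) := by
  apply monotoneOn_of_deriv_nonneg (convex_Icc 0 1)
  · exact fun t ht => (hf t ht).continuousAt.continuousWithinAt
  · intro t ht
    rw [interior_Icc] at ht
    exact (hf t (Set.mem_Icc_of_Ioo ht)).differentiableAt.differentiableWithinAt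
  · intro t ht
    rw [interior_Icc] at ht
    rw [(hf t (Set.mem_Icc_of_Ioo ht)).deriv]
    exact h0 t (Set.mem_Icc_of_Ioo ht)

/-- Two-sided quadratic-form bounds for a (pointwise) inverse of a symmetric operator
with two-sided quadratic-form bounds. -/
private lemma invQuad {E : Type*} [NormedAddCommGroup E] [InnerProductSpace ℝ E]
    (A : E →L[ℝ] E) (μ L : ℝ) (hμ : 0 < μ) (hμL : μ ≤ L)
    (hsym : ∀ a b : E, ⟪A a, b⟫ = ⟪A b, a⟫)
    (hlow : ∀ z : E, μ * ‖z‖ ^ 2 ≤ ⟪A z, z⟫)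
    (hhigh : ∀ z : E, ⟪A z, z⟫ ≤ L * ‖z‖ ^ 2)
    (v u : E) (hu : A v = u) :
    ‖u‖ ^ 2 / L ≤ ⟪v, u⟫ ∧ ⟪v, u⟫ ≤ ‖u‖ ^ 2 / μ := by
  have hL : 0 < L := lt_of_lt_of_le hμ hμL
  have hvu : ⟪v, u⟫ = ⟪A v, v⟫ := by rw [← hu, real_inner_comm]
  have hPnn : 0 ≤ ⟪A v, v⟫ := le_trans (mul_nonneg hμ.le (sq_nonneg _)) (hlow v)
  constructor
  · -- lower bound
    by_cases hu0 : u = 0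
    · simp [hu0]
    · have hupos : 0 < ‖u‖ := norm_pos_iff.2 hu0
      have hq : ⟪A v, u⟫ = ‖u‖ ^ 2 := by rw [hu, real_inner_self_eq_norm_sq]
      -- Cauchy–Schwarz for the bilinear form of A
      have key : 0 ≤ ⟪A u, u⟫ * (⟪A u, u⟫ * ⟪A v, v⟫ - ⟪A v, u⟫ * ⟪A v, u⟫) := by
        have h1 : (0:ℝ) ≤ ⟪A (⟪A u, u⟫ • v - ⟪A v, u⟫ • u), ⟪A u, u⟫ • v - ⟪A v, u⟫ • u⟫ :=
          le_trans (mul_nonneg hμ.le (sq_nonneg _)) (hlow _)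
        have h2 : ⟪A (⟪A u, u⟫ • v - ⟪A v, u⟫ • u), ⟪A u, u⟫ • v - ⟪A v, u⟫ • u⟫ =
            ⟪A u, u⟫ * (⟪A u, u⟫ * ⟪A v, v⟫ - ⟪A v, u⟫ * ⟪A v, u⟫) := by
          simp only [map_sub, map_smul, inner_sub_left, inner_sub_right,
            real_inner_smul_left, real_inner_smul_right, hsym u v]
          ring
        linarith [h2 ▸ h1]
      have hr := hlow u
      have hr' := hhigh u
      have hRpos : 0 < ⟪A u, u⟫ := lt_of_lt_of_le (mul_pos hμ (pow_pos hupos 2)) hr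
      have hkey2 : ⟪A v, u⟫ * ⟪A v, u⟫ ≤ ⟪A u, u⟫ * ⟪A v, v⟫ := by
        nlinarith [key, hRpos]
      rw [hq] at hkey2
      have hx : 0 ≤ (L * ‖u‖ ^ 2 - ⟪A u, u⟫) * ⟪A v, v⟫ :=
        mul_nonneg (by linarith) hPnn
      rw [div_le_iff₀ hL, hvu]
      nlinarith [hkey2, hx, mul_pos hupos hupos]
  · -- upper bound
    by_cases hv0 : v = 0
    · have : u = 0 := by rw [← hu, hv0, map_zero]
      simp only [hv0, inner_zero_left, this, norm_zero]
      positivity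
    · have hvpos : 0 < ‖v‖ := norm_pos_iff.2 hv0
      have h1 : μ * ‖v‖ ^ 2 ≤ ‖v‖ * ‖u‖ := by
        refine le_trans (hlow v) ?_
        calc ⟪A v, v⟫ ≤ ‖A v‖ * ‖v‖ := real_inner_le_norm _ _
          _ = ‖v‖ * ‖u‖ := by rw [hu]; ring
      have h2 : ⟪v, u⟫ ≤ ‖v‖ * ‖u‖ := real_inner_le_norm v u
      have h3 : μ * ‖v‖ ≤ ‖u‖ := by nlinarith [h1, hvpos]
      rw [le_div_iff₀ hμ]
      nlinarith [h2, h3, norm_nonneg u, hμ, hvpos]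

set_option maxHeartbeats 1000000 in
/-- **Bregman quasi-triangle inequality.** Under the mirror hypotheses with Hessian
bounds `0 < μ ≤ 𝓛` on `X` and `κ = 𝓛/μ`, for all `x, w, v ∈ X`:
`D_h(x, v) ≤ 2κ D_h(x, w) + 2κ D_h(w, v)`. -/
theorem bregman_quasi_triangle
    {E : Type*} [NormedAddCommGroup E] [InnerProductSpace ℝ E] [FiniteDimensional ℝ E]
    (X : Set E) (h : E → ℝ) (h' : E → E) (h'' : E → E →L[ℝ] E)
    (mh : MirrorHyp h h' h'' X)
    (μ 𝓛 : ℝ) (hμ : 0 < μ) (hμ𝓛 : μ ≤ 𝓛)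
    (hbound : ∀ u ∈ X, ∀ v : E,
      μ * ‖v‖ ^ 2 ≤ ⟪h'' u v, v⟫ ∧ ⟪h'' u v, v⟫ ≤ 𝓛 * ‖v‖ ^ 2) :
    ∀ x ∈ X, ∀ w ∈ X, ∀ v ∈ X,
      bregman h h' x v ≤
        2 * (𝓛 / μ) * bregman h h' x w + 2 * (𝓛 / μ) * bregman h h' w v := by
  have hSX : ∀ {ww : E}, ww ∈ h' '' X → mh.gstar ww ∈ X := fun {ww} hww =>
    mh.gstar_maps ww (subset_convexHull ℝ _ hww)
  set L : E →L[ℝ] StrongDual ℝ E :=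
    (InnerProductSpace.toDual ℝ E).toContinuousLinearEquiv.toContinuousLinearMap with hLdef
  -- symmetry of the Hessian on `U`
  have hsym : ∀ u ∈ mh.U, ∀ a b : E, ⟪h'' u a, b⟫ = ⟪h'' u b, a⟫ := by
    intro u hu a b
    have hev : ∀ᶠ y in nhds u, HasFDerivAt h (L (h' y)) y := by
      filter_upwards [mh.isOpen_U.mem_nhds hu] with y hy
      exact (mh.grad y hy).hasFDerivAt
    have hmain : HasFDerivAt (fun y => L (h' y)) (L.comp (h'' u)) u :=
      L.hasFDerivAt.comp u (mh.hess u hu)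
    have hs := second_derivative_symmetric_of_eventually_of_real hev hmain a b
    have ea : (L.comp (h'' u)) a b = ⟪h'' u a, b⟫ := by
      simp [hLdef, InnerProductSpace.toDual_apply_apply]
    have eb : (L.comp (h'' u)) b a = ⟪h'' u b, a⟫ := by
      simp [hLdef, InnerProductSpace.toDual_apply_apply]
    rw [← ea, ← eb, hs]
  -- gstar is differentiable on `h' '' X` with derivative inverse to the Hessian
  have hgd : ∀ ww ∈ h' '' X, HasFDerivAt mh.gstar (fderiv ℝ mh.gstar ww) ww ∧
      ∀ z : E, h'' (mh.gstar ww) (fderiv ℝ mh.gstar ww z) = z := by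
    intro ww hww
    have hwV : ww ∈ mh.V := mh.img_subset_V hww
    have hdiff : DifferentiableAt ℝ mh.gstar ww :=
      (mh.gstar_contDiff.differentiableOn one_ne_zero).differentiableAt (mh.isOpen_V.mem_nhds hwV)
    have hD := hdiff.hasFDerivAt
    refine ⟨hD, ?_⟩
    have hgX : mh.gstar ww ∈ X := hSX hww
    have hchain : HasFDerivAt (h' ∘ mh.gstar)
        ((h'' (mh.gstar ww)).comp (fderiv ℝ mh.gstar ww)) ww :=
      (mh.hess _ (mh.subset_U hgX)).comp ww hD
    have hcong : HasFDerivAt (fun z : E => z)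
        ((h'' (mh.gstar ww)).comp (fderiv ℝ mh.gstar ww)) ww := by
      apply hchain.congr_of_eventuallyEq
      filter_upwards [mh.isOpen_V.mem_nhds hwV] with z hz
      exact (mh.gstar_rightInv z hz).symm
    have heq := hcong.unique (hasFDerivAt_id ww)
    intro z
    have := ContinuousLinearMap.ext_iff.1 heq z
    simpa using this
  -- key two-sided bound for a pair of points
  have pair : ∀ p ∈ X, ∀ q ∈ X,
      ‖h' q - h' p‖ ^ 2 / (2 * 𝓛) ≤ bregman h h' p q ∧
      bregman h h' p q ≤ ‖h' q - h' p‖ ^ 2 / (2 * μ) := by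
    intro p hp q hq
    set a : E := h' q with ha
    set b : E := h' p with hb
    set u : E := a - b with hu
    set γ : ℝ → E := fun t => mh.gstar (b + t • u) with hγ
    have hmem : ∀ t ∈ Set.Icc (0:ℝ) 1, b + t • u ∈ h' '' X := fun t ht =>
      mh.img_convex.add_smul_sub_mem ⟨p, hp, rfl⟩ ⟨q, hq, rfl⟩ ht
    have hc : ∀ t : ℝ, HasDerivAt (fun s : ℝ => b + s • u) u t := by
      intro t
      simpa using ((hasDerivAt_id t).smul_const u).const_add b
    have hγd : ∀ t ∈ Set.Icc (0:ℝ) 1,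
        HasDerivAt γ (fderiv ℝ mh.gstar (b + t • u) u) t := fun t ht =>
      ((hgd _ (hmem t ht)).1).comp_hasDerivAt t (hc t)
    set φ : ℝ → ℝ := fun t => ⟪u, γ t⟫ with hφ
    have hφd : ∀ t ∈ Set.Icc (0:ℝ) 1,
        HasDerivAt φ ⟪u, fderiv ℝ mh.gstar (b + t • u) u⟫ t := by
      intro t ht
      simpa using (hasDerivAt_const t u).inner ℝ (hγd t ht)
    have hbφ : ∀ t ∈ Set.Icc (0:ℝ) 1,
        ‖u‖ ^ 2 / 𝓛 ≤ ⟪u, fderiv ℝ mh.gstar (b + t • u) u⟫ ∧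
        ⟪u, fderiv ℝ mh.gstar (b + t • u) u⟫ ≤ ‖u‖ ^ 2 / μ := by
      intro t ht
      have hm := hmem t ht
      have hgX : mh.gstar (b + t • u) ∈ X := hSX hm
      have hres := invQuad (h'' (mh.gstar (b + t • u))) μ 𝓛 hμ hμ𝓛
        (hsym _ (mh.subset_U hgX)) (fun z => (hbound _ hgX z).1) (fun z => (hbound _ hgX z).2)
        (fderiv ℝ mh.gstar (b + t • u) u) u ((hgd _ hm).2 u)
      constructor
      · rw [real_inner_comm]; exact hres.1
      · rw [real_inner_comm]; exact hres.2
    set F : ℝ → ℝ := fun t => ⟪b + t • u, γ t⟫ - h (γ t) with hF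
    have hFd : ∀ t ∈ Set.Icc (0:ℝ) 1, HasDerivAt F (φ t) t := by
      intro t ht
      have hγt := hγd t ht
      have h1 : HasDerivAt (fun s : ℝ => ⟪b + s • u, γ s⟫)
          (⟪b + t • u, fderiv ℝ mh.gstar (b + t • u) u⟫ + ⟪u, γ t⟫) t :=
        (hc t).inner ℝ hγt
      have hgX : mh.gstar (b + t • u) ∈ X := hSX (hmem t ht)
      have h2 : HasDerivAt (fun s : ℝ => h (γ s))
          ⟪h' (γ t), fderiv ℝ mh.gstar (b + t • u) u⟫ t := by
        have hgr := (mh.grad (γ t) (mh.subset_U hgX)).hasFDerivAt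
        have hcomp := hgr.comp_hasDerivAt t hγt
        simpa [InnerProductSpace.toDual_apply_apply, Function.comp_def] using hcomp
      have h3 : h' (γ t) = b + t • u := mh.gstar_rightInv _ (mh.img_subset_V (hmem t ht))
      rw [h3] at h2
      have h4 := h1.sub h2
      convert h4 using 1
      · rfl
      · rfl
      · rfl
      simp only [hφ]
      ring
    -- stage 1 : bounds for φ t - φ 0
    have stage1up : ∀ t ∈ Set.Icc (0:ℝ) 1, φ t - φ 0 ≤ t * (‖u‖ ^ 2 / μ) := by
      intro t ht
      have hmono : MonotoneOn (fun s => s * (‖u‖ ^ 2 / μ) - φ s) (Set.Icc 0 1) := by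
        apply monoAux (f' := fun s => ‖u‖ ^ 2 / μ - ⟪u, fderiv ℝ mh.gstar (b + s • u) u⟫)
        · exact fun s hs => (hasDerivAt_mul_const _).sub (hφd s hs)
        · intro s hs; linarith [(hbφ s hs).2]
      have h0 : (0:ℝ) * (‖u‖ ^ 2 / μ) - φ 0 ≤ t * (‖u‖ ^ 2 / μ) - φ t :=
        hmono (Set.left_mem_Icc.mpr zero_le_one) ht ht.1
      linarith
    have stage1lo : ∀ t ∈ Set.Icc (0:ℝ) 1, t * (‖u‖ ^ 2 / 𝓛) ≤ φ t - φ 0 := by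
      intro t ht
      have hmono : MonotoneOn (fun s => φ s - s * (‖u‖ ^ 2 / 𝓛)) (Set.Icc 0 1) := by
        apply monoAux (f' := fun s => ⟪u, fderiv ℝ mh.gstar (b + s • u) u⟫ - ‖u‖ ^ 2 / 𝓛)
        · exact fun s hs => (hφd s hs).sub (hasDerivAt_mul_const _)
        · intro s hs; linarith [(hbφ s hs).1]
      have h0 : φ 0 - (0:ℝ) * (‖u‖ ^ 2 / 𝓛) ≤ φ t - t * (‖u‖ ^ 2 / 𝓛) :=
        hmono (Set.left_mem_Icc.mpr zero_le_one) ht ht.1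
      linarith
    -- stage 2 : bounds for F 1 - F 0 - φ 0
    have stage2up : F 1 - F 0 - 1 * φ 0 ≤ ‖u‖ ^ 2 / (2 * μ) := by
      have hmono : MonotoneOn
          (fun s => s ^ 2 * (‖u‖ ^ 2 / μ) / 2 - (F s - F 0 - s * φ 0)) (Set.Icc 0 1) := by
        apply monoAux (f' := fun s => 2 * s ^ 1 * (‖u‖ ^ 2 / μ) / 2 - (φ s - φ 0))
        · intro s hs
          exact (((hasDerivAt_pow 2 s).mul_const _).div_const 2).sub
            (((hFd s hs).sub_const (F 0)).sub (hasDerivAt_mul_const _))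
        · intro s hs
          have he : 2 * s ^ 1 * (‖u‖ ^ 2 / μ) / 2 = s * (‖u‖ ^ 2 / μ) := by ring
          rw [he]
          linarith [stage1up s hs]
      have h0 := hmono (Set.left_mem_Icc.mpr zero_le_one)
        (Set.right_mem_Icc.mpr zero_le_one) zero_le_one
      simp only at h0
      have : ‖u‖ ^ 2 / (2 * μ) = 1 ^ 2 * (‖u‖ ^ 2 / μ) / 2 := by ring
      rw [this]
      nlinarith [h0]
    have stage2lo : ‖u‖ ^ 2 / (2 * 𝓛) ≤ F 1 - F 0 - 1 * φ 0 := by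
      have hmono : MonotoneOn
          (fun s => (F s - F 0 - s * φ 0) - s ^ 2 * (‖u‖ ^ 2 / 𝓛) / 2) (Set.Icc 0 1) := by
        apply monoAux (f' := fun s => (φ s - φ 0) - 2 * s ^ 1 * (‖u‖ ^ 2 / 𝓛) / 2)
        · intro s hs
          exact (((hFd s hs).sub_const (F 0)).sub (hasDerivAt_mul_const _)).sub
            (((hasDerivAt_pow 2 s).mul_const _).div_const 2)
        · intro s hs
          have he : 2 * s ^ 1 * (‖u‖ ^ 2 / 𝓛) / 2 = s * (‖u‖ ^ 2 / 𝓛) := by ring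
          rw [he]
          linarith [stage1lo s hs]
      have h0 := hmono (Set.left_mem_Icc.mpr zero_le_one)
        (Set.right_mem_Icc.mpr zero_le_one) zero_le_one
      simp only at h0
      have : ‖u‖ ^ 2 / (2 * 𝓛) = 1 ^ 2 * (‖u‖ ^ 2 / 𝓛) / 2 := by ring
      rw [this]
      nlinarith [h0]
    -- identification of F 1 - F 0 - φ 0 with the Bregman divergence
    have hK : F 1 - F 0 - 1 * φ 0 = bregman h h' p q := by
      have hb1 : b + (1:ℝ) • u = a := by rw [one_smul, hu]; abel
      have hb0 : b + (0:ℝ) • u = b := by rw [zero_smul, add_zero]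
      have hγ1 : γ 1 = q := by
        show mh.gstar (b + (1:ℝ) • u) = q
        rw [hb1, ha]
        exact mh.gstar_leftInv q hq
      have hγ0 : γ 0 = p := by
        show mh.gstar (b + (0:ℝ) • u) = p
        rw [hb0, hb]
        exact mh.gstar_leftInv p hp
      show (⟪b + (1:ℝ) • u, γ 1⟫ - h (γ 1)) - (⟪b + (0:ℝ) • u, γ 0⟫ - h (γ 0))
          - 1 * ⟪u, γ 0⟫ = bregman h h' p q
      rw [hb1, hb0, hγ1, hγ0, hu]
      simp only [bregman, ← ha, inner_sub_left, inner_sub_right]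
      ring
    rw [hK] at stage2up stage2lo
    have hun : u = h' q - h' p := by rw [hu, ha, hb]
    rw [hun] at stage2up stage2lo
    exact ⟨stage2lo, stage2up⟩
  -- assemble the quasi-triangle inequality
  intro x hx w hw v hv
  have h1 := (pair x hx v hv).2
  have h2 := (pair x hx w hw).1
  have h3 := (pair w hw v hv).1
  have hL : 0 < 𝓛 := lt_of_lt_of_le hμ hμ𝓛
  have hnorm : ‖h' v - h' x‖ ^ 2 ≤ 2 * ‖h' w - h' x‖ ^ 2 + 2 * ‖h' v - h' w‖ ^ 2 := by
    have e : h' v - h' x = (h' v - h' w) + (h' w - h' x) := by abel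
    rw [e]
    have h4 : ‖h' v - h' w + (h' w - h' x)‖ ^ 2 ≤ (‖h' v - h' w‖ + ‖h' w - h' x‖) ^ 2 :=
      pow_le_pow_left₀ (norm_nonneg _) (norm_add_le _ _) 2
    nlinarith [h4, sq_nonneg (‖h' v - h' w‖ - ‖h' w - h' x‖)]
  calc bregman h h' x v ≤ ‖h' v - h' x‖ ^ 2 / (2 * μ) := h1
    _ ≤ (2 * ‖h' w - h' x‖ ^ 2 + 2 * ‖h' v - h' w‖ ^ 2) / (2 * μ) := by gcongr
    _ = 2 * (𝓛 / μ) * (‖h' w - h' x‖ ^ 2 / (2 * 𝓛))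
        + 2 * (𝓛 / μ) * (‖h' v - h' w‖ ^ 2 / (2 * 𝓛)) := by
      field_simp
    _ ≤ 2 * (𝓛 / μ) * bregman h h' x w + 2 * (𝓛 / μ) * bregman h h' w v := by
      have hκ : 0 ≤ 2 * (𝓛 / μ) := by positivity
      exact add_le_add (mul_le_mul_of_nonneg_left h2 hκ) (mul_le_mul_of_nonneg_left h3 hκ)
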